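/- There is an absolute constant C > 0 such that the following holds. Fix a power of two n ≥ 2, a positive integer d, N = n^d, and an integer k with 1 ≤ k ≤ N. Let S be a Bernoulli set with rate k/N in (ZMod n)^d, and let B = (B_1,…,B_d) be a vector of powers of two with B_q dividing n for each q and with |B| ≥ 4k. Then with probability at least 1 − 1/N³ the following event occurs: for every b ∈ [B], the number of g ∈ S with g mod B = b is at most C·log₂ N. -/

import Mathlib

open scoped BigOperators ENNReal
open MeasureTheory

lemma fiber_card_aux {G H : Type*} [AddGroup G] [Fintype G] [AddGroup H] [Fintype H]
    [DecidableEq H] (f : G →+ H) (hf : Function.Surjective f) (b : H) :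
    (Finset.univ.filter (fun g => f g = b)).card * Fintype.card H = Fintype.card G := by
  classical
  have h1 : ∀ b' : H, (Finset.univ.filter (fun g => f g = b')).card
      = (Finset.univ.filter (fun g => f g = b)).card := fun b' =>
    AddMonoidHom.card_fiber_eq_of_mem_range f (hf b') (hf b)
  have h2 : Fintype.card G = ∑ b' : H, (Finset.univ.filter (fun g => f g = b')).card := by
    rw [← Finset.card_univ]
    exact Finset.card_eq_sum_card_fiberwise (fun g _ => Finset.mem_univ _)
  rw [h2]
  simp only [h1, Finset.sum_const, Finset.card_univ, smul_eq_mul]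
  ring

lemma pi_cyl_measure {ι : Type*} [Fintype ι] (ν : Measure Bool) [IsProbabilityMeasure ν]
    (T : Finset ι) :
    Measure.pi (fun _ : ι => ν) {ω : ι → Bool | ∀ g ∈ T, ω g = true}
      = ν {true} ^ T.card := by
  classical
  have hset : {ω : ι → Bool | ∀ g ∈ T, ω g = true}
      = Set.pi Set.univ (fun g => if g ∈ T then {true} else Set.univ) := by
    ext ω
    simp only [Set.mem_setOf_eq, Set.mem_pi, Set.mem_univ, true_implies]
    constructor
    · intro h g
      by_cases hg : g ∈ T <;> simp [hg, h]
    · intro h g hg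
      have := h g
      simpa [hg] using this
  rw [hset, Measure.pi_pi]
  have : ∀ g : ι, ν (if g ∈ T then ({true} : Set Bool) else Set.univ)
      = if g ∈ T then ν {true} else 1 := by
    intro g; by_cases hg : g ∈ T
    · simp [hg]
    · simp only [if_neg hg]; exact measure_univ
  simp only [this]
  rw [Finset.prod_ite_mem, Finset.univ_inter, Finset.prod_const]

theorem stmt14 : ∃ C : ℝ, 0 < C ∧
    ∀ (m : ℕ), 1 ≤ m → ∀ (n : ℕ), n = 2 ^ m → ∀ [NeZero n],
    ∀ (d : ℕ), 1 ≤ d → ∀ (k : ℕ), 1 ≤ k → k ≤ n ^ d →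
    ∀ (B : Fin d → ℕ), (∀ q, ∃ e : ℕ, B q = 2 ^ e) →
      ∀ (hB : ∀ q, B q ∣ n), 4 * k ≤ ∏ q, B q →
    ∀ (μ : Measure ((Fin d → ZMod n) → Bool)),
      μ = (Measure.pi fun _ : Fin d → ZMod n =>
        (1 - (k : ℝ≥0∞) / ((n : ℝ≥0∞) ^ d)) • Measure.dirac false +
          ((k : ℝ≥0∞) / ((n : ℝ≥0∞) ^ d)) • Measure.dirac true) →
    1 - 1 / ((n : ℝ≥0∞) ^ d) ^ 3 ≤
      μ {ω | ∀ b : ∀ q, ZMod (B q),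
        (({g : Fin d → ZMod n | ω g = true ∧
            ∀ q, ZMod.castHom (hB q) (ZMod (B q)) (g q) = b q}.ncard : ℝ))
          ≤ C * Real.logb 2 ((n : ℝ) ^ d)} := by
  classical
  refine ⟨2, by norm_num, ?_⟩
  intro m hm n hn _ d hd k hk hkN B hB2 hB hBk μ hμ
  haveI hBq : ∀ q, NeZero (B q) := fun q => by
    obtain ⟨e, he⟩ := hB2 q
    exact ⟨by rw [he]; positivity⟩
  have hn0 : 0 < n := by rw [hn]; positivity
  -- the reduction homomorphism
  let φ : (Fin d → ZMod n) →+ (∀ q, ZMod (B q)) :=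
    { toFun := fun g q => ZMod.castHom (hB q) (ZMod (B q)) (g q)
      map_zero' := funext fun q => map_zero (ZMod.castHom (hB q) (ZMod (B q)))
      map_add' := fun x y => funext fun q => map_add (ZMod.castHom (hB q) (ZMod (B q))) _ _ }
  have hφs : Function.Surjective φ := by
    intro b
    refine ⟨fun q => ((b q).val : ZMod n), funext fun q => ?_⟩
    show ZMod.castHom (hB q) (ZMod (B q)) (((b q).val : ℕ) : ZMod n) = b q
    rw [map_natCast]
    exact ZMod.natCast_rightInverse (b q)
  have hcardH : Fintype.card (∀ q, ZMod (B q)) = ∏ q, B q := by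
    simp [Fintype.card_pi, ZMod.card]
  have hcardG : Fintype.card (Fin d → ZMod n) = n ^ d := by
    simp [ZMod.card]
  have hfib : ∀ b, (Finset.univ.filter (fun g => φ g = b)).card * (∏ q, B q) = n ^ d := by
    intro b
    rw [← hcardH, ← hcardG]
    exact fiber_card_aux φ hφs b
  -- the Bernoulli parameter
  set p : ℝ≥0∞ := (k : ℝ≥0∞) / ((n : ℝ≥0∞) ^ d) with hp
  have hNne : ((n : ℝ≥0∞) ^ d) ≠ 0 :=
    pow_ne_zero d (by exact_mod_cast hn0.ne')
  have hNtop : ((n : ℝ≥0∞) ^ d) ≠ ⊤ := by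
    exact ENNReal.pow_ne_top (ENNReal.natCast_ne_top n)
  have hp1 : p ≤ 1 := by
    rw [hp]
    apply ENNReal.div_le_of_le_mul
    rw [one_mul]
    exact_mod_cast le_trans (Nat.cast_le.mpr hkN) (le_of_eq (by push_cast; ring))
  set ν : Measure Bool := (1 - p) • Measure.dirac false + p • Measure.dirac true with hν
  have hνtrue : ν {true} = p := by
    rw [hν]
    simp [Measure.dirac_apply]
  haveI hνprob : IsProbabilityMeasure ν := by
    constructor
    rw [hν]
    simp only [Measure.coe_add, Measure.coe_smul, Pi.add_apply, Pi.smul_apply,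
      measure_univ, smul_eq_mul, mul_one]
    exact tsub_add_cancel_of_le hp1
  subst hμ
  -- abbreviations
  set t : ℕ := 2 * (m * d) with ht
  -- the event and its complement
  set E : Set ((Fin d → ZMod n) → Bool) := {ω | ∀ b : ∀ q, ZMod (B q),
        (({g : Fin d → ZMod n | ω g = true ∧
            ∀ q, ZMod.castHom (hB q) (ZMod (B q)) (g q) = b q}.ncard : ℝ))
          ≤ 2 * Real.logb 2 ((n : ℝ) ^ d)} with hE
  have hEmeas : MeasurableSet E := (Set.to_countable _).measurableSet
  have hlogb : (2:ℝ) * Real.logb 2 ((n : ℝ) ^ d) = (t : ℝ) := by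
    rw [hn, ht]
    push_cast
    rw [← pow_mul, Real.logb_pow, Real.logb_self_eq_one (by norm_num)]
    push_cast
    ring
  -- inclusion of the complement in a union of cylinders
  set Fb : (∀ q, ZMod (B q)) → Finset (Fin d → ZMod n) :=
    fun b => Finset.univ.filter (fun g => φ g = b) with hFb
  set cyl : Finset (Fin d → ZMod n) → Set ((Fin d → ZMod n) → Bool) :=
    fun T => {ω | ∀ g ∈ T, ω g = true} with hcyl
  have hsub : Eᶜ ⊆ ⋃ b : (∀ q, ZMod (B q)), ⋃ T ∈ (Fb b).powersetCard (t+1), cyl T := by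
    intro ω hω
    rw [hE] at hω
    simp only [Set.mem_compl_iff, Set.mem_setOf_eq, not_forall] at hω
    obtain ⟨b, hb⟩ := hω
    rw [hlogb] at hb
    have hcount : ({g : Fin d → ZMod n | ω g = true ∧
        ∀ q, ZMod.castHom (hB q) (ZMod (B q)) (g q) = b q}).ncard
        = (Finset.univ.filter (fun g : Fin d → ZMod n => ω g = true ∧
            ∀ q, ZMod.castHom (hB q) (ZMod (B q)) (g q) = b q)).card := by
      rw [Set.ncard_eq_toFinset_card']
      exact congrArg Finset.card (Finset.ext fun g => by rw [Set.mem_toFinset, Finset.mem_filter]; simp)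
    rw [hcount] at hb
    have hlt : t + 1 ≤ (Finset.univ.filter (fun g : Fin d → ZMod n => ω g = true ∧
        ∀ q, ZMod.castHom (hB q) (ZMod (B q)) (g q) = b q)).card := by
      have := lt_of_not_ge hb
      exact_mod_cast Nat.succ_le_of_lt (by exact_mod_cast this)
    obtain ⟨T, hTsub, hTcard⟩ := Finset.exists_subset_card_eq hlt
    refine Set.mem_iUnion.mpr ⟨b, Set.mem_iUnion₂.mpr ⟨T, ?_, ?_⟩⟩
    · rw [Finset.mem_powersetCard]
      refine ⟨fun g hg => ?_, hTcard⟩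
      have := hTsub hg
      simp only [Finset.mem_filter, Finset.mem_univ, true_and] at this
      rw [hFb]
      simp only [Finset.mem_filter, Finset.mem_univ, true_and]
      funext q
      exact this.2 q
    · intro g hg
      have := hTsub hg
      simp only [Finset.mem_filter, Finset.mem_univ, true_and] at this
      exact this.1
  -- the measure bound
  have hMp : ∀ b : (∀ q, ZMod (B q)), ((Fb b).card : ℝ≥0∞) * p ≤ 4⁻¹ := by
    intro b
    have hnat : 4 * ((Fb b).card * k) ≤ n ^ d := by
      calc 4 * ((Fb b).card * k) = (Fb b).card * (4 * k) := by ring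
        _ ≤ (Fb b).card * (∏ q, B q) := Nat.mul_le_mul_left _ hBk
        _ = n ^ d := hfib b
    rw [hp, ← mul_div_assoc]
    apply ENNReal.div_le_of_le_mul
    have h1 : ((Fb b).card * k : ℝ≥0∞) = ((4:ℝ≥0∞))⁻¹ * (4 * ((Fb b).card * k)) := by
      rw [← mul_assoc, ENNReal.inv_mul_cancel (by norm_num) (by norm_num), one_mul]
    calc ((Fb b).card : ℝ≥0∞) * (k:ℝ≥0∞) = (((Fb b).card * k : ℕ) : ℝ≥0∞) := by push_cast; ring
      _ = (4:ℝ≥0∞)⁻¹ * ((4 * ((Fb b).card * k) : ℕ) : ℝ≥0∞) := by push_cast; rw [← mul_assoc, ENNReal.inv_mul_cancel (by norm_num) (by norm_num), one_mul]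
      _ ≤ (4:ℝ≥0∞)⁻¹ * ((n:ℝ≥0∞) ^ d) := by
          apply mul_le_mul_right
          calc ((4 * ((Fb b).card * k) : ℕ) : ℝ≥0∞) ≤ ((n ^ d : ℕ) : ℝ≥0∞) := Nat.cast_le.mpr hnat
            _ = (n:ℝ≥0∞) ^ d := by push_cast; ring
  have key : Measure.pi (fun _ : Fin d → ZMod n => ν) Eᶜ ≤ 1 / ((n : ℝ≥0∞) ^ d) ^ 3 := by
    calc Measure.pi (fun _ : Fin d → ZMod n => ν) Eᶜ
        ≤ Measure.pi (fun _ : Fin d → ZMod n => ν)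
            (⋃ b : (∀ q, ZMod (B q)), ⋃ T ∈ (Fb b).powersetCard (t+1), cyl T) :=
          measure_mono hsub
      _ ≤ ∑ b : (∀ q, ZMod (B q)), Measure.pi (fun _ : Fin d → ZMod n => ν)
            (⋃ T ∈ (Fb b).powersetCard (t+1), cyl T) := measure_iUnion_fintype_le _ _
      _ ≤ ∑ b : (∀ q, ZMod (B q)), ∑ T ∈ (Fb b).powersetCard (t+1),
            Measure.pi (fun _ : Fin d → ZMod n => ν) (cyl T) :=
          Finset.sum_le_sum fun b _ => measure_biUnion_finset_le _ _
      _ = ∑ b : (∀ q, ZMod (B q)), ∑ T ∈ (Fb b).powersetCard (t+1), p ^ (t+1) := by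
          refine Finset.sum_congr rfl fun b _ => Finset.sum_congr rfl fun T hT => ?_
          rw [Finset.mem_powersetCard] at hT
          rw [hcyl]
          rw [pi_cyl_measure ν T, hνtrue, hT.2]
      _ = ∑ b : (∀ q, ZMod (B q)), ((Fb b).card.choose (t+1) : ℝ≥0∞) * p ^ (t+1) := by
          refine Finset.sum_congr rfl fun b _ => ?_
          rw [Finset.sum_const, Finset.card_powersetCard, nsmul_eq_mul]
      _ ≤ ∑ b : (∀ q, ZMod (B q)), (4⁻¹ : ℝ≥0∞) ^ (t+1) := by
          refine Finset.sum_le_sum fun b _ => ?_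
          calc ((Fb b).card.choose (t+1) : ℝ≥0∞) * p ^ (t+1)
              ≤ (((Fb b).card : ℝ≥0∞) ^ (t+1)) * p ^ (t+1) := by
                apply mul_le_mul_left
                exact_mod_cast Nat.cast_le.mpr (Nat.choose_le_pow _ _)
            _ = (((Fb b).card : ℝ≥0∞) * p) ^ (t+1) := (mul_pow _ _ _).symm
            _ ≤ (4⁻¹ : ℝ≥0∞) ^ (t+1) := pow_le_pow_left₀ zero_le (hMp b) _
      _ = (Fintype.card (∀ q, ZMod (B q)) : ℝ≥0∞) * (4⁻¹ : ℝ≥0∞) ^ (t+1) := by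
          rw [Finset.sum_const, Finset.card_univ, nsmul_eq_mul]
      _ ≤ ((n : ℝ≥0∞) ^ d) * (4⁻¹ : ℝ≥0∞) ^ (t+1) := by
          apply mul_le_mul_left
          rw [hcardH]
          calc ((∏ q, B q : ℕ) : ℝ≥0∞) ≤ ((n ^ d : ℕ) : ℝ≥0∞) := by
                apply Nat.cast_le.mpr
                calc ∏ q, B q ≤ ∏ _q : Fin d, n :=
                    Finset.prod_le_prod' fun q _ => Nat.le_of_dvd hn0 (hB q)
                  _ = n ^ d := by simp
            _ = (n:ℝ≥0∞) ^ d := by push_cast; ring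
      _ ≤ 1 / ((n : ℝ≥0∞) ^ d) ^ 3 := by
          rw [hn, ht]
          push_cast
          rw [← pow_mul]
          have h2 : (4⁻¹ : ℝ≥0∞) = (2⁻¹) ^ 2 := by
            rw [← ENNReal.inv_pow]; norm_num
          rw [h2, ← pow_mul]
          have hexp : 2 * (2 * (m * d) + 1) = (m * d) + (3 * (m * d) + 2) := by ring
          rw [hexp, pow_add, ← mul_assoc]
          have hcancel : (2:ℝ≥0∞) ^ (m * d) * (2⁻¹ : ℝ≥0∞) ^ (m * d) = 1 := by
            rw [← mul_pow, ENNReal.mul_inv_cancel (by norm_num) (by norm_num), one_pow]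
          rw [hcancel, one_mul, one_div, ← pow_mul, ENNReal.inv_pow]
          exact pow_le_pow_of_le_one (zero_le : (0:ℝ≥0∞) ≤ 2⁻¹)
            (ENNReal.inv_le_one.mpr one_le_two) (by omega)
  -- conclude
  have hfin : Measure.pi (fun _ : Fin d → ZMod n => ν) E
      = 1 - Measure.pi (fun _ : Fin d → ZMod n => ν) Eᶜ := by
    have h := prob_compl_eq_one_sub (μ := Measure.pi (fun _ : Fin d → ZMod n => ν)) hEmeas.compl
    rwa [compl_compl] at h
  rw [hfin]
  exact tsub_le_tsub_left key 1
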